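/- For every positive natural number m, every subalgebra of Łₘ is the carrier of a copy of Ł_d for a divisor d of m: if S is a subset of Łₘ containing 0 and closed under ⊕ and ¬, then there exists a positive natural number d dividing m such that S = {k/d : k ∈ ℕ, 0 ≤ k ≤ d} (as a subset of {k/m : 0 ≤ k ≤ m} ⊆ ℚ). -/

import Mathlib

/-- The carrier of the Łukasiewicz chain Łₙ : {k/n : k ∈ ℕ, 0 ≤ k ≤ n} ⊆ ℚ. -/
abbrev Luk (n : ℕ+) : Type := {x : ℚ // ∃ k : ℕ, k ≤ (n : ℕ) ∧ x = (k : ℚ) / (n : ℕ)}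

/-- The constant 0 of Łₙ. -/
def lukZero (n : ℕ+) : Luk n := ⟨0, 0, Nat.zero_le _, by simp⟩

/-- The negation ¬x = 1 - x of Łₙ. -/
def lukNeg {n : ℕ+} (x : Luk n) : Luk n :=
  ⟨1 - x.1, by
    obtain ⟨k, hk, hx⟩ := x.2
    refine ⟨(n : ℕ) - k, Nat.sub_le _ _, ?_⟩
    have hn : ((n : ℕ) : ℚ) ≠ 0 := by exact_mod_cast n.pos.ne'
    rw [hx, Nat.cast_sub hk, sub_div, div_self hn]⟩

/-- The truncated sum x ⊕ y = min 1 (x + y) of Łₙ. -/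
def lukOplus {n : ℕ+} (x y : Luk n) : Luk n :=
  ⟨min 1 (x.1 + y.1), by
    obtain ⟨k, hk, hx⟩ := x.2
    obtain ⟨j, hj, hy⟩ := y.2
    refine ⟨min (n : ℕ) (k + j), min_le_left _ _, ?_⟩
    have hn : (0 : ℚ) < ((n : ℕ) : ℚ) := by exact_mod_cast n.pos
    rw [hx, hy, ← add_div]
    rcases le_total (k + j) (n : ℕ) with h | h
    · rw [min_eq_right h, min_eq_right]
      · push_cast; ring_nf
      · rw [div_le_one hn]; exact_mod_cast h
    · rw [min_eq_left h, min_eq_left, div_self hn.ne']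
      · rw [one_le_div hn]; exact_mod_cast h⟩

/-- Every subalgebra of Łₘ is the copy of Ł_d inside Łₘ for some divisor d of m. -/
theorem subalg_of_luk (m : ℕ+) (S : Set (Luk m)) (h0 : lukZero m ∈ S)
    (hop : ∀ x ∈ S, ∀ y ∈ S, lukOplus x y ∈ S) (hneg : ∀ x ∈ S, lukNeg x ∈ S) :
    ∃ d : ℕ+, (d : ℕ) ∣ (m : ℕ) ∧
      S = {x : Luk m | ∃ k : ℕ, k ≤ (d : ℕ) ∧ (x : ℚ) = (k : ℚ) / (d : ℕ)} := by
  classical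
  have hmpos : 0 < (m : ℕ) := m.pos
  have hmQ : (0 : ℚ) < ((m : ℕ) : ℚ) := by exact_mod_cast hmpos
  set P : ℕ → Prop := fun k => ∃ x ∈ S, (x : ℚ) = (k : ℚ) / ((m : ℕ) : ℚ) with hPdef
  have hPle : ∀ k, P k → k ≤ (m : ℕ) := by
    rintro k ⟨x, hx, hxk⟩
    obtain ⟨j, hj, hxj⟩ := x.2
    have h : (k : ℚ) / ((m : ℕ) : ℚ) = (j : ℚ) / ((m : ℕ) : ℚ) := by
      rw [← hxk, hxj]
    have h2 : (k : ℚ) = (j : ℚ) := by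
      field_simp at h; exact_mod_cast h
    have : k = j := by exact_mod_cast h2
    omega
  have hP0 : P 0 := ⟨lukZero m, h0, by simp [lukZero]⟩
  have hPm : P (m : ℕ) := by
    refine ⟨lukNeg (lukZero m), hneg _ h0, ?_⟩
    simp [lukNeg, lukZero, div_self hmQ.ne']
  have hPadd : ∀ a b, P a → P b → P (min (m : ℕ) (a + b)) := by
    rintro a b ⟨x, hx, hxa⟩ ⟨y, hy, hyb⟩
    refine ⟨lukOplus x y, hop _ hx _ hy, ?_⟩
    show min 1 (x.1 + y.1) = _
    rw [hxa, hyb, ← add_div]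
    rcases le_total (a + b) (m : ℕ) with h | h
    · rw [min_eq_right h, min_eq_right]
      · push_cast; ring_nf
      · rw [div_le_one hmQ]; exact_mod_cast h
    · rw [min_eq_left h, min_eq_left, div_self hmQ.ne']
      · rw [one_le_div hmQ]; exact_mod_cast h
  have hPsub : ∀ a b, P a → P b → P (a - b) := by
    rintro a b ⟨x, hx, hxa⟩ ⟨y, hy, hyb⟩
    refine ⟨lukNeg (lukOplus (lukNeg x) y), hneg _ (hop _ (hneg _ hx) _ hy), ?_⟩
    show 1 - min 1 ((1 - x.1) + y.1) = _
    rw [hxa, hyb]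
    rcases le_total b a with h | h
    · have h1 : (1 - (a : ℚ) / ((m : ℕ) : ℚ)) + (b : ℚ) / ((m : ℕ) : ℚ)
          = 1 - ((a - b : ℕ) : ℚ) / ((m : ℕ) : ℚ) := by
        rw [Nat.cast_sub h]; ring
      rw [h1, min_eq_right]
      · ring
      · have : (0 : ℚ) ≤ ((a - b : ℕ) : ℚ) / ((m : ℕ) : ℚ) :=
          div_nonneg (by positivity) hmQ.le
        linarith
    · have hab : a - b = 0 := by omega
      rw [hab, min_eq_left]
      · simp
      · have hba : (a : ℚ) / ((m : ℕ) : ℚ) ≤ (b : ℚ) / ((m : ℕ) : ℚ) := by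
          gcongr <;> try exact_mod_cast h
        linarith
  -- the least positive element of the numerator set
  have hne : ∃ k, 0 < k ∧ P k := ⟨(m : ℕ), hmpos, hPm⟩
  set e : ℕ := sInf {k | 0 < k ∧ P k} with hedef
  obtain ⟨hepos, heP⟩ : 0 < e ∧ P e := Nat.sInf_mem hne
  have hemin : ∀ k, 0 < k → P k → e ≤ k := fun k hk hPk => Nat.sInf_le ⟨hk, hPk⟩
  have hmod : ∀ a, P a → P (a % e) := by
    intro a
    induction a using Nat.strong_induction_on with
    | _ a ih =>
      intro ha
      rcases lt_or_ge a e with h | h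
      · rwa [Nat.mod_eq_of_lt h]
      · have h1 : P (a - e) := hPsub a e ha heP
        have h2 : a - e < a := Nat.sub_lt (lt_of_lt_of_le hepos h) hepos
        have := ih _ h2 h1
        rwa [Nat.mod_eq_sub_mod h]
  have hdvd : ∀ a, P a → e ∣ a := by
    intro a ha
    have h1 := hmod a ha
    have h2 : a % e < e := Nat.mod_lt _ hepos
    rcases Nat.eq_zero_or_pos (a % e) with h | h
    · exact Nat.dvd_of_mod_eq_zero h
    · exact absurd (hemin _ h h1) (by omega)
  have hedvdm : e ∣ (m : ℕ) := hdvd _ hPm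
  have hmul : ∀ j, j * e ≤ (m : ℕ) → P (j * e) := by
    intro j
    induction j with
    | zero => intro _; simpa using hP0
    | succ j ih =>
      intro hj
      have hje : j * e + e = (j + 1) * e := by ring
      have hj' : j * e ≤ (m : ℕ) :=
        le_trans (Nat.le_add_right _ _) (by rw [hje]; exact hj)
      have h1 := hPadd (j * e) e (ih hj') heP
      have h2 : min (m : ℕ) (j * e + e) = (j + 1) * e := by
        rw [min_eq_right (by rw [hje]; exact hj)]; exact hje
      rwa [h2] at h1
  set d : ℕ := (m : ℕ) / e with hddef
  have hdpos : 0 < d := Nat.div_pos (hPle e heP) hepos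
  have hmed : (m : ℕ) = e * d := (Nat.mul_div_cancel' hedvdm).symm
  have heQ : ((e : ℕ) : ℚ) ≠ 0 := by exact_mod_cast hepos.ne'
  have hdQ : (0 : ℚ) < ((d : ℕ) : ℚ) := by exact_mod_cast hdpos
  refine ⟨⟨d, hdpos⟩, ⟨e, by rw [hmed]; exact Nat.mul_comm e d⟩, ?_⟩
  ext x
  simp only [Set.mem_setOf_eq, PNat.mk_coe]
  constructor
  · intro hxS
    obtain ⟨a, ha, hxa⟩ := x.2
    have hPa : P a := ⟨x, hxS, hxa⟩
    obtain ⟨k, hk⟩ := hdvd a hPa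
    refine ⟨k, ?_, ?_⟩
    · have : e * k ≤ e * d := by rw [← hk, ← hmed]; exact ha
      exact le_of_mul_le_mul_left this hepos
    · rw [hxa, hk, hmed]
      push_cast
      field_simp
  · rintro ⟨k, hk, hxk⟩
    have hle : k * e ≤ (m : ℕ) := by rw [hmed]; nlinarith
    obtain ⟨y, hyS, hy⟩ := hmul k hle
    have hxy : (x : ℚ) = (y : ℚ) := by
      rw [hxk, hy, hmed]
      push_cast
      field_simp
    have : x = y := Subtype.ext hxy
    rwa [this]
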